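/- Let ω̃_{ij} for distinct i, j ∈ {1,2,3,4,5} be strictly positive real numbers with ω̃_{ij} = ω̃_{ji}, ω̃_{35} ≥ ω̃_{24}, ω̃_{25} ≥ ω̃_{13}, and suppose ω̃_{35}ω̃_{14} + ω̃_{14}ω̃_{25} + ω̃_{25}ω̃_{24} + ω̃_{13}ω̃_{35} ≤ ω̃_{35}ω̃_{25}. Put E := ω̃_{24}ω̃_{35} + ω̃_{25}ω̃_{13} + 2ω̃_{25}ω̃_{35}, y₂ = −2(ω̃_{24}ω̃_{13} + ω̃_{24}ω̃_{35} + ω̃_{25}ω̃_{13} + 2ω̃_{25}ω̃_{35} − ω̃_{13}² − 2ω̃_{13}ω̃_{35} − ω̃_{35}ω̃_{14})/E, y₃ = 2(ω̃_{24}ω̃_{13} + ω̃_{24}ω̃_{35} + ω̃_{25}ω̃_{13} + 2ω̃_{25}ω̃_{35} − ω̃_{24}² − 2ω̃_{24}ω̃_{25} − ω̃_{14}ω̃_{25})/E, and p₁ = (0,−1), p₂ = (1,y₂), p₃ = (1,y₃), p₄ = (0,1), p₅ = (−1,0) in ℝ². Then −2 < y₂ < y₃ < 2 (so p₁,…,p₅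 form a strictly convex pentagon in this cyclic order), and there exist real boundary stresses ω_{12}, ω_{23}, ω_{34}, ω_{45}, ω_{15} such that every vertex is in equilibrium: for each i ∈ {1,…,5}, Σ_{j ≠ i} ω̃_{ij}(p_i − p_j) + Σ_{j adjacent to i in the 5-cycle 1-2-3-4-5} ω_{ij}(p_i − p_j) = (0,0). -/

import Mathlib

open BigOperators

set_option maxHeartbeats 1000000 in
/-- **Case 3B (pentagonal outer face).** The vertices `1,…,5` are indexed by `Fin 5` as
`0,…,4`, so `ω̃₁₃ = w 0 2`, `ω̃₁₄ = w 0 3`, `ω̃₂₄ = w 1 3`, `ω̃₂₅ = w 1 4`,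
`ω̃₃₅ = w 2 4`. Given symmetric positive substitution stresses with `ω̃₃₅ ≥ ω̃₂₄`,
`ω̃₂₅ ≥ ω̃₁₃` and `ω̃₃₅ω̃₁₄ + ω̃₁₄ω̃₂₅ + ω̃₂₅ω̃₂₄ + ω̃₁₃ω̃₃₅ ≤ ω̃₃₅ω̃₂₅`, the placement
`p₁=(0,-1), p₂=(1,y₂), p₃=(1,y₃), p₄=(0,1), p₅=(-1,0)` satisfies `-2 < y₂ < y₃ < 2`
(a strictly convex pentagon), and there exist boundary stresses on the 5-cycle putting
every vertex in equilibrium. -/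
theorem pentagon_case3B_boundary_equilibrium
    (w : Fin 5 → Fin 5 → ℝ)
    (hpos : ∀ i j, i ≠ j → 0 < w i j)
    (hsym : ∀ i j, w i j = w j i)
    (h35 : w 1 3 ≤ w 2 4)
    (h25 : w 0 2 ≤ w 1 4)
    (hcase : w 2 4 * w 0 3 + w 0 3 * w 1 4 + w 1 4 * w 1 3 + w 0 2 * w 2 4
              ≤ w 2 4 * w 1 4) :
    let E : ℝ := w 1 3 * w 2 4 + w 1 4 * w 0 2 + 2 * w 1 4 * w 2 4
    let y2 : ℝ := -2 * (w 1 3 * w 0 2 + w 1 3 * w 2 4 + w 1 4 * w 0 2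
        + 2 * w 1 4 * w 2 4 - (w 0 2) ^ 2 - 2 * w 0 2 * w 2 4 - w 2 4 * w 0 3) / E
    let y3 : ℝ := 2 * (w 1 3 * w 0 2 + w 1 3 * w 2 4 + w 1 4 * w 0 2
        + 2 * w 1 4 * w 2 4 - (w 1 3) ^ 2 - 2 * w 1 3 * w 1 4 - w 0 3 * w 1 4) / E
    let p : Fin 5 → ℝ × ℝ := ![(0, -1), (1, y2), (1, y3), (0, 1), (-1, 0)]
    (-2 < y2 ∧ y2 < y3 ∧ y3 < 2) ∧
      ∃ ov : Fin 5 → ℝ,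
        ∀ i : Fin 5,
          (∑ j ∈ Finset.univ.filter (fun j => j ≠ i), w i j • (p i - p j))
              + ov i • (p i - p (i + 1)) + ov (i - 1) • (p i - p (i - 1)) = 0 := by
  intro E y2 y3 p
  have ha : 0 < w 0 2 := hpos 0 2 (by decide)
  have hb : 0 < w 0 3 := hpos 0 3 (by decide)
  have hc : 0 < w 1 3 := hpos 1 3 (by decide)
  have hd : 0 < w 1 4 := hpos 1 4 (by decide)
  have he : 0 < w 2 4 := hpos 2 4 (by decide)
  have hE : 0 < E := by
    have := mul_pos hc he; have := mul_pos hd ha; have := mul_pos hd he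
    simp only [E]; linarith
  have h2 : -2 < y2 := by
    simp only [y2, E] at hE ⊢
    rw [lt_div_iff₀ hE]
    nlinarith [mul_pos he hb, mul_pos ha he, mul_nonneg ha.le (sub_nonneg.mpr h35),
      mul_pos ha ha]
  have h32 : y3 < 2 := by
    simp only [y3, E] at hE ⊢
    rw [div_lt_iff₀ hE]
    nlinarith [mul_pos hb hd, mul_pos hc hd, mul_nonneg hc.le (sub_nonneg.mpr h25),
      mul_pos hc hc]
  have h23 : y2 < y3 := by
    simp only [y2, y3, E] at hE ⊢
    rw [div_lt_div_iff₀ hE hE]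
    nlinarith [mul_le_mul_of_nonneg_left h25 ha.le, mul_le_mul_of_nonneg_left h35 hc.le,
      mul_le_mul_of_nonneg_right h35 hd.le, mul_le_mul_of_nonneg_right h25 he.le,
      mul_pos ha hc, mul_pos hc he, mul_pos ha hd, mul_pos hd he]
  have hD : y2 - y3 ≠ 0 := sub_ne_zero.mpr (ne_of_lt h23)
  have hEy2 : y2 * E = -2 * (w 1 3 * w 0 2 + w 1 3 * w 2 4 + w 1 4 * w 0 2
        + 2 * w 1 4 * w 2 4 - (w 0 2) ^ 2 - 2 * w 0 2 * w 2 4 - w 2 4 * w 0 3) := by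
    exact div_mul_cancel₀ _ hE.ne'
  have hEy3 : y3 * E = 2 * (w 1 3 * w 0 2 + w 1 3 * w 2 4 + w 1 4 * w 0 2
        + 2 * w 1 4 * w 2 4 - (w 1 3) ^ 2 - 2 * w 1 3 * w 1 4 - w 0 3 * w 1 4) := by
    exact div_mul_cancel₀ _ hE.ne'
  have hEdef : E = w 1 3 * w 2 4 + w 1 4 * w 0 2 + 2 * w 1 4 * w 2 4 := rfl
  have hy2 : y2 = -2 * (w 1 3 * w 0 2 + w 1 3 * w 2 4 + w 1 4 * w 0 2
        + 2 * w 1 4 * w 2 4 - (w 0 2) ^ 2 - 2 * w 0 2 * w 2 4 - w 2 4 * w 0 3) / E := rfl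
  have hy3 : y3 = 2 * (w 1 3 * w 0 2 + w 1 3 * w 2 4 + w 1 4 * w 0 2
        + 2 * w 1 4 * w 2 4 - (w 1 3) ^ 2 - 2 * w 1 3 * w 1 4 - w 0 3 * w 1 4) / E := rfl
  have e10 : w 1 0 = w 0 1 := hsym 1 0
  have e20 : w 2 0 = w 0 2 := hsym 2 0
  have e21 : w 2 1 = w 1 2 := hsym 2 1
  have e30 : w 3 0 = w 0 3 := hsym 3 0
  have e31 : w 3 1 = w 1 3 := hsym 3 1
  have e32 : w 3 2 = w 2 3 := hsym 3 2
  have e40 : w 4 0 = w 0 4 := hsym 4 0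
  have e41 : w 4 1 = w 1 4 := hsym 4 1
  have e42 : w 4 2 = w 2 4 := hsym 4 2
  have e43 : w 4 3 = w 3 4 := hsym 4 3
  have hN : (-2 * (w 1 3 * w 0 2 + w 1 3 * w 2 4 + w 1 4 * w 0 2
        + 2 * w 1 4 * w 2 4 - (w 0 2) ^ 2 - 2 * w 0 2 * w 2 4 - w 2 4 * w 0 3))
      - (2 * (w 1 3 * w 0 2 + w 1 3 * w 2 4 + w 1 4 * w 0 2
        + 2 * w 1 4 * w 2 4 - (w 1 3) ^ 2 - 2 * w 1 3 * w 1 4 - w 0 3 * w 1 4))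
      = (y2 - y3) * E := by
    rw [hy2, hy3]; field_simp
  have hNne := hN ▸ mul_ne_zero hD hE.ne'
  have hEne2 : (w 1 3 * w 2 4 + w 1 4 * w 0 2 + 2 * w 1 4 * w 2 4) ≠ 0 := hEdef ▸ hE.ne'
  clear_value y2 y3
  clear_value E
  clear hpos hsym hcase h25 h35
  refine ⟨⟨h2, h23, h32⟩,
    ⟨![-(w 1 3 + 2 * w 1 4) - w 0 1,
       (w 1 4 * y2 + 2 * w 1 3 + 2 * w 1 4) / (y2 - y3) - w 1 2,
       -(w 0 2 + 2 * w 2 4) - w 2 3,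
       w 1 3 - w 0 2 - 2 * w 2 4 - w 3 4,
       w 0 2 - w 1 3 - 2 * w 1 4 - w 0 4], ?_⟩⟩
  have f0p : (0:Fin 5) + 1 = 1 := rfl
  have f1p : (1:Fin 5) + 1 = 2 := rfl
  have f2p : (2:Fin 5) + 1 = 3 := rfl
  have f3p : (3:Fin 5) + 1 = 4 := rfl
  have f4p : (4:Fin 5) + 1 = 0 := rfl
  have f0m : (0:Fin 5) - 1 = 4 := rfl
  have f1m : (1:Fin 5) - 1 = 0 := rfl
  have f2m : (2:Fin 5) - 1 = 1 := rfl
  have f3m : (3:Fin 5) - 1 = 2 := rfl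
  have f4m : (4:Fin 5) - 1 = 3 := rfl
  intro i
  have h5 : i = 0 ∨ i = 1 ∨ i = 2 ∨ i = 3 ∨ i = 4 := by omega
  rcases h5 with rfl | rfl | rfl | rfl | rfl
  -- vertex 1 (i = 0)
  · simp only [p, Fin.isValue, Finset.sum_filter, Fin.sum_univ_five,
      f0p, f0m, e10, e20, e21, e30, e31, e32, e40, e41, e42, e43]
    simp (config := { decide := true }) only [Matrix.cons_val_zero, Matrix.cons_val_one,
      Matrix.head_cons, Matrix.cons_val_two, Matrix.cons_val_three, Matrix.cons_val_four,
      Matrix.tail_cons, if_true, if_false, Prod.fst_zero, Prod.snd_zero,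
      Prod.smul_mk, Prod.mk_add_mk, Prod.mk_sub_mk, Prod.ext_iff, smul_eq_mul,
      Prod.fst_add, Prod.snd_add, Prod.fst_sub, Prod.snd_sub]
    refine ⟨by ring, ?_⟩
    apply mul_left_cancel₀ hE.ne'
    linear_combination (w 1 3 + 2 * w 1 4) * hEy2 - w 0 2 * hEy3
      + (2 * w 1 3 + 4 * w 1 4 - 2 * w 0 2 - 2 * w 0 3) * hEdef
  -- vertex 2 (i = 1)
  · simp only [p, Fin.isValue, Finset.sum_filter, Fin.sum_univ_five,
      f1p, f1m, e10, e20, e21, e30, e31, e32, e40, e41, e42, e43]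
    simp (config := { decide := true }) only [Matrix.cons_val_zero, Matrix.cons_val_one,
      Matrix.head_cons, Matrix.cons_val_two, Matrix.cons_val_three, Matrix.cons_val_four,
      Matrix.tail_cons, if_true, if_false, Prod.fst_zero, Prod.snd_zero,
      Prod.smul_mk, Prod.mk_add_mk, Prod.mk_sub_mk, Prod.ext_iff, smul_eq_mul,
      Prod.fst_add, Prod.snd_add, Prod.fst_sub, Prod.snd_sub]
    refine ⟨by ring, ?_⟩
    rw [show ((w 1 4 * y2 + 2 * w 1 3 + 2 * w 1 4) / (y2 - y3) - w 1 2) * (y2 - y3)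
        = w 1 4 * y2 + 2 * w 1 3 + 2 * w 1 4 - w 1 2 * (y2 - y3) from by
      rw [sub_mul, div_mul_cancel₀ _ hD]]
    ring
  -- vertex 3 (i = 2)
  · simp only [p, Fin.isValue, Finset.sum_filter, Fin.sum_univ_five,
      f2p, f2m, e10, e20, e21, e30, e31, e32, e40, e41, e42, e43]
    simp (config := { decide := true }) only [Matrix.cons_val_zero, Matrix.cons_val_one,
      Matrix.head_cons, Matrix.cons_val_two, Matrix.cons_val_three, Matrix.cons_val_four,
      Matrix.tail_cons, if_true, if_false, Prod.fst_zero, Prod.snd_zero,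
      Prod.smul_mk, Prod.mk_add_mk, Prod.mk_sub_mk, Prod.ext_iff, smul_eq_mul,
      Prod.fst_add, Prod.snd_add, Prod.fst_sub, Prod.snd_sub]
    have hcan : ((w 1 4 * y2 + 2 * w 1 3 + 2 * w 1 4) / (y2 - y3) - w 1 2) * (y3 - y2)
        = -(w 1 4 * y2 + 2 * w 1 3 + 2 * w 1 4) + w 1 2 * (y2 - y3) := by
      rw [show y3 - y2 = -(y2 - y3) from by ring, mul_neg, sub_mul,
        div_mul_cancel₀ _ hD]
      ring
    refine ⟨?_, ?_⟩
    · ring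
    · rw [hcan]
      apply mul_left_cancel₀ hE.ne'
      linear_combination (-(w 1 4)) * hEy2 - w 2 4 * hEy3
        + (2 * w 0 2 + 2 * w 2 4 - 2 * w 1 3 - 2 * w 1 4) * hEdef
  -- vertex 4 (i = 3)
  · simp only [p, Fin.isValue, Finset.sum_filter, Fin.sum_univ_five,
      f3p, f3m, e10, e20, e21, e30, e31, e32, e40, e41, e42, e43]
    simp (config := { decide := true }) only [Matrix.cons_val_zero, Matrix.cons_val_one,
      Matrix.head_cons, Matrix.cons_val_two, Matrix.cons_val_three, Matrix.cons_val_four,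
      Matrix.tail_cons, if_true, if_false, Prod.fst_zero, Prod.snd_zero,
      Prod.smul_mk, Prod.mk_add_mk, Prod.mk_sub_mk, Prod.ext_iff, smul_eq_mul,
      Prod.fst_add, Prod.snd_add, Prod.fst_sub, Prod.snd_sub]
    refine ⟨by ring, ?_⟩
    apply mul_left_cancel₀ hE.ne'
    linear_combination (-(w 1 3)) * hEy2 + (w 0 2 + 2 * w 2 4) * hEy3
      + (2 * w 0 3 + 2 * w 1 3 - 2 * w 0 2 - 4 * w 2 4) * hEdef
  -- vertex 5 (i = 4)
  · simp only [p, Fin.isValue, Finset.sum_filter, Fin.sum_univ_five,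
      f4p, f4m, e10, e20, e21, e30, e31, e32, e40, e41, e42, e43]
    simp (config := { decide := true }) only [Matrix.cons_val_zero, Matrix.cons_val_one,
      Matrix.head_cons, Matrix.cons_val_two, Matrix.cons_val_three, Matrix.cons_val_four,
      Matrix.tail_cons, if_true, if_false, Prod.fst_zero, Prod.snd_zero,
      Prod.smul_mk, Prod.mk_add_mk, Prod.mk_sub_mk, Prod.ext_iff, smul_eq_mul,
      Prod.fst_add, Prod.snd_add, Prod.fst_sub, Prod.snd_sub]
    refine ⟨by ring, ?_⟩
    apply mul_left_cancel₀ hE.ne'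
    linear_combination (-(w 1 4)) * hEy2 - w 2 4 * hEy3
      + (2 * w 0 2 + 2 * w 2 4 - 2 * w 1 3 - 2 * w 1 4) * hEdef
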